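/- Let k ∈ ℤ and let σ_ab be the 2-cocycle on Heis^ℤ(k) defined by σ_ab((a₁,b₁,c₁),(a₂,b₂,c₂)) = a₁·b₂. Then for every integer m, the cocycle m·σ_ab is a 2-coboundary on Heis^ℤ(k) (i.e. there exists β : Heis^ℤ(k) → ℤ with m·a₁·b₂ = β(γ₁) + β(γ₂) − β(γ₁·γ₂) for all γ₁,γ₂ ∈ Heis^ℤ(k)) if and only if k divides m. In particular, when k divides m with m = q·k, one may take β(a,b,c) = −q·c. -/

import Mathlib

/-- The integer Heisenberg group `Heis k`: underlying set `ℤ³` with multiplication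
`(a₁,b₁,c₁)·(a₂,b₂,c₂) = (a₁+a₂, b₁+b₂, c₁+c₂+k·a₁·b₂)`. -/
@[ext] structure Heis (k : ℤ) where
  a : ℤ
  b : ℤ
  c : ℤ

namespace Heis

variable {k : ℤ}

instance : Mul (Heis k) :=
  ⟨fun x y => ⟨x.a + y.a, x.b + y.b, x.c + y.c + k * x.a * y.b⟩⟩

instance : One (Heis k) := ⟨⟨0, 0, 0⟩⟩

instance : Inv (Heis k) := ⟨fun x => ⟨-x.a, -x.b, -x.c + k * x.a * x.b⟩⟩

@[simp] theorem mul_def (x y : Heis k) :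
    x * y = ⟨x.a + y.a, x.b + y.b, x.c + y.c + k * x.a * y.b⟩ := rfl

@[simp] theorem one_def : (1 : Heis k) = ⟨0, 0, 0⟩ := rfl

@[simp] theorem inv_def (x : Heis k) :
    x⁻¹ = ⟨-x.a, -x.b, -x.c + k * x.a * x.b⟩ := rfl

instance : Group (Heis k) where
  mul_assoc x y z := by ext <;> simp <;> ring
  one_mul x := by ext <;> simp
  mul_one x := by ext <;> simp
  inv_mul_cancel x := by ext <;> simp [mul_comm]

end Heis

/-- For `k ∈ ℤ` and the cocycle `σ_ab(γ₁,γ₂) = a₁·b₂` on `Heis k`: for every integer `m`, the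
cocycle `m·σ_ab` is a 2-coboundary if and only if `k ∣ m`; and when `m = q·k` the function
`β(a,b,c) = −q·c` is an explicit witness. -/
theorem heis_sigma_ab_coboundary_iff (k m : ℤ) :
    ((∃ β : Heis k → ℤ,
        ∀ γ₁ γ₂ : Heis k, m * γ₁.a * γ₂.b = β γ₁ + β γ₂ - β (γ₁ * γ₂)) ↔ k ∣ m) ∧
    (∀ q : ℤ, m = q * k →
      ∀ γ₁ γ₂ : Heis k,
        m * γ₁.a * γ₂.b = (-q * γ₁.c) + (-q * γ₂.c) - (-q * (γ₁ * γ₂).c)) := by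

  constructor
  · constructor
    · rintro ⟨β, hβ⟩
      -- β is additive on the center (0,0,·)
      have hadd : ∀ c d : ℤ, β ⟨0,0,c⟩ + β ⟨0,0,d⟩ - β ⟨0,0,c+d⟩ = 0 := by
        intro c d
        have := hβ ⟨0,0,c⟩ ⟨0,0,d⟩
        simpa using this.symm
      have h0 : β ⟨0,0,0⟩ = 0 := by
        have := hadd 0 0
        simpa using this
      have hlin : ∀ n : ℤ, β ⟨0,0,n⟩ = n * β ⟨0,0,1⟩ := by
        intro n
        induction n using Int.induction_on with
        | zero => simpa using h0
        | succ i ih =>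
          have h := hadd i 1
          push_cast at ih ⊢
          linarith
        | pred i ih =>
          have h := hadd (-i) (-1)
          have hm1 := hadd 1 (-1)
          have e : (-(i:ℤ)) + -1 = -(i:ℤ) - 1 := by ring
          rw [e] at h
          simp only [add_neg_cancel, h0] at hm1
          push_cast at ih ⊢
          linarith
      have h1 := hβ ⟨1,0,0⟩ ⟨0,1,0⟩
      have h2 := hβ ⟨0,1,0⟩ ⟨1,0,0⟩
      have h3 := hβ ⟨1,1,0⟩ ⟨0,0,k⟩
      simp [Heis.mul_def] at h1 h2 h3
      have hk := hlin k
      refine ⟨-β ⟨0,0,1⟩, ?_⟩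
      linear_combination h1 - h2 - h3 - hk
    · rintro ⟨q, hq⟩
      exact ⟨fun γ => -q * γ.c, fun γ₁ γ₂ => by simp [Heis.mul_def, hq]; ring⟩
  · intro q hq γ₁ γ₂
    simp [Heis.mul_def, hq]
    ring
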